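/- Let n ≥ 3 and let a₁, …, a_n be pairwise coprime integers with a_i ≥ 2 for each i, and set a := a₁a₂⋯a_n. For each i let β_i be the unique integer with 0 < β_i < a_i and a_i ∣ 1 + β_i·(a/a_i). Then, as real numbers, R(a₁,…,a_n) = 2·(1/a + Σ_{i=1}^{n} β_i/a_i) − 3; that is, 2/a − 3 + n + Σ_{i=1}^{n} (2/a_i)·Σ_{k=1}^{a_i−1} cot(πka/a_i²)·cot(πk/a_i)·sin²(πk/a_i) = 2·(1/a + Σ_{i=1}^{n} β_i/a_i) − 3. -/

import Mathlib

open Real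

noncomputable section

/-- The `i`-th summand of the Fintushel–Stern invariant:
`(2/m)·Σ_{k=1}^{m-1} cot(πkA/m²)·cot(πk/m)·sin²(πk/m)`, where `A` is the (real) product of
the multiplicities. -/
def fsTerm (A : ℝ) (m : ℕ) : ℝ :=
  (2 / (m : ℝ)) * ∑ k ∈ Finset.Icc 1 (m - 1),
    Real.cot (π * k * A / (m : ℝ) ^ 2) * Real.cot (π * k / (m : ℝ)) *
      Real.sin (π * k / (m : ℝ)) ^ 2

/-- The Fintushel–Stern invariant
`R(a₁,…,aₙ) = 2/a - 3 + n + Σᵢ (2/aᵢ)·Σ_{k=1}^{aᵢ-1} cot(πka/aᵢ²)·cot(πk/aᵢ)·sin²(πk/aᵢ)`. -/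
def FSR (n : ℕ) (a : Fin n → ℕ) : ℝ :=
  2 / (∏ j, (a j : ℝ)) - 3 + n + ∑ i, fsTerm (∏ j, (a j : ℝ)) (a i)


lemma sum_cos_eq_zero (m j : ℕ) (hm : 0 < m) (hj : ¬ (m ∣ j)) :
    ∑ k ∈ Finset.range m, Real.cos (2 * π * j * k / m) = 0 := by
  have hm' : (m : ℝ) ≠ 0 := Nat.cast_ne_zero.2 hm.ne'
  have hmC : (m : ℂ) ≠ 0 := Nat.cast_ne_zero.2 hm.ne'
  set θ : ℝ := 2 * π * j / m with hθ
  set ζ : ℂ := Complex.exp (θ * Complex.I) with hζ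
  have hzk : ∀ k : ℕ, (ζ ^ k).re = Real.cos (2 * π * j * k / m) := by
    intro k
    rw [hζ, ← Complex.exp_nat_mul]
    have : (k : ℂ) * (θ * Complex.I) = ((2 * π * j * k / m : ℝ) : ℂ) * Complex.I := by
      rw [hθ]; push_cast; ring
    rw [this, Complex.exp_ofReal_mul_I_re]
  have hζm : ζ ^ m = 1 := by
    rw [hζ, ← Complex.exp_nat_mul]
    have : (m : ℂ) * (θ * Complex.I) = (j : ℤ) * (2 * π * Complex.I) := by
      rw [hθ]; push_cast; field_simp
    rw [this, Complex.exp_int_mul_two_pi_mul_I]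
  have hζ1 : ζ ≠ 1 := by
    intro h
    rw [hζ, Complex.exp_eq_one_iff] at h
    obtain ⟨c, hc⟩ := h
    have hI : (θ : ℂ) = c * (2 * π) := by
      have := mul_right_cancel₀ Complex.I_ne_zero (by rw [hc]; ring : (θ:ℂ) * Complex.I = ((c:ℂ) * (2*π)) * Complex.I)
      exact this
    have hr : θ = (c : ℝ) * (2 * π) := by exact_mod_cast hI
    rw [hθ] at hr
    have hπ : (π : ℝ) ≠ 0 := Real.pi_ne_zero
    have hjr : (j : ℝ) = c * m := by
      field_simp at hr
      nlinarith [hr, Real.pi_pos]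
    have hjz : (j : ℤ) = c * m := by exact_mod_cast hjr
    exact hj (Int.natCast_dvd_natCast.mp ⟨c, by rw [hjz]; ring⟩)
  calc ∑ k ∈ Finset.range m, Real.cos (2 * π * j * k / m)
      = (∑ k ∈ Finset.range m, ζ ^ k).re := by
        rw [Complex.re_sum]; exact (Finset.sum_congr rfl fun k _ => (hzk k).symm)
    _ = 0 := by rw [geom_sum_eq hζ1, hζm]; simp

lemma cot_add_int_mul_pi (x : ℝ) (n : ℤ) : Real.cot (x + n * π) = Real.cot x := by
  rw [Real.cot_eq_cos_div_sin, Real.cot_eq_cos_div_sin, Real.cos_add_int_mul_pi,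
    Real.sin_add_int_mul_pi, mul_div_mul_left]
  positivity

lemma sum_cos_Icc (m j : ℕ) (hm : 2 ≤ m) (hj1 : 1 ≤ j) (hj : j < m) :
    ∑ k ∈ Finset.Icc 1 (m - 1), Real.cos (2 * π * j * k / m) = -1 := by
  have hrange : Finset.range m = insert 0 (Finset.Icc 1 (m - 1)) := by
    ext x; simp [Finset.mem_range, Finset.mem_Icc]; omega
  have h0 : (0:ℕ) ∉ Finset.Icc 1 (m - 1) := by simp
  have := sum_cos_eq_zero m j (by omega) (fun h => absurd (Nat.le_of_dvd (by omega) h) (by omega))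
  rw [hrange, Finset.sum_insert h0] at this
  have h00 : Real.cos (2 * π * j * (0:ℕ) / m) = 1 := by norm_num
  linarith [this, h00]

lemma cot_mul_sin_nat (x : ℝ) (hx : Real.sin x ≠ 0) (d : ℕ) :
    Real.cot x * Real.sin (2 * d * x) =
      2 * ∑ j ∈ Finset.range d, Real.cos (2 * j * x) - 1 + Real.cos (2 * d * x) := by
  induction d with
  | zero => simp
  | succ d ih =>
    have hcast : ((d+1 : ℕ) : ℝ) = (d : ℝ) + 1 := by push_cast; ring
    rw [Finset.sum_range_succ, hcast]
    have h1 : Real.sin (2 * ((d:ℝ)+1) * x) - Real.sin (2 * d * x)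
        = 2 * Real.sin x * Real.cos ((2 * d + 1) * x) := by
      rw [Real.sin_sub_sin]
      have e1 : (2 * ((d:ℝ)+1) * x - 2 * d * x) / 2 = x := by ring
      have e2 : (2 * ((d:ℝ)+1) * x + 2 * d * x) / 2 = (2 * (d:ℝ) + 1) * x := by ring
      rw [e1, e2]
    have h2 : Real.cot x * (2 * Real.sin x * Real.cos ((2 * d + 1) * x))
        = 2 * Real.cos x * Real.cos ((2 * d + 1) * x) := by
      rw [Real.cot_eq_cos_div_sin]; field_simp
    have h3 : Real.cos (2 * ((d:ℝ)+1) * x) + Real.cos (2 * d * x)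
        = 2 * Real.cos x * Real.cos ((2 * d + 1) * x) := by
      rw [Real.cos_add_cos]
      have e1 : (2 * ((d:ℝ)+1) * x - 2 * d * x) / 2 = x := by ring
      have e2 : (2 * ((d:ℝ)+1) * x + 2 * d * x) / 2 = (2 * (d:ℝ) + 1) * x := by ring
      rw [e1, e2]; ring
    calc Real.cot x * Real.sin (2 * ((d:ℝ)+1) * x)
        = Real.cot x * Real.sin (2 * d * x)
          + Real.cot x * (Real.sin (2 * ((d:ℝ)+1) * x) - Real.sin (2 * d * x)) := by ring
      _ = Real.cot x * Real.sin (2 * d * x)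
          + (Real.cos (2 * ((d:ℝ)+1) * x) + Real.cos (2 * d * x)) := by rw [h1, h2, ← h3]
      _ = 2 * (∑ j ∈ Finset.range d, Real.cos (2 * j * x) + Real.cos (2 * d * x)) - 1
          + Real.cos (2 * ((d:ℝ)+1) * x) := by rw [ih]; ring

lemma lemA (m d : ℕ) (hm : 2 ≤ m) (hd1 : 1 ≤ d) (hd : d ≤ m - 1) :
    ∑ k ∈ Finset.Icc 1 (m - 1), Real.cot (π * k / m) * Real.sin (2 * π * k * d / m)
      = m - 2 * d := by
  have hm' : (0:ℝ) < m := by positivity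
  have hsin : ∀ k ∈ Finset.Icc 1 (m - 1), Real.sin (π * k / m) ≠ 0 := by
    intro k hk
    simp only [Finset.mem_Icc] at hk
    have h1 : 0 < π * k / m := by
      have : (0:ℝ) < k := by exact_mod_cast Nat.lt_of_lt_of_le Nat.zero_lt_one hk.1
      positivity
    have h2 : π * k / m < π := by
      rw [div_lt_iff₀ hm']
      have : (k:ℝ) < m := by exact_mod_cast (by omega : k < m)
      nlinarith [Real.pi_pos]
    exact (Real.sin_pos_of_pos_of_lt_pi h1 h2).ne'
  have step1 : ∑ k ∈ Finset.Icc 1 (m - 1), Real.cot (π * k / m) * Real.sin (2 * π * k * d / m)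
      = ∑ k ∈ Finset.Icc 1 (m - 1),
          (2 * ∑ j ∈ Finset.range d, Real.cos (2 * π * j * k / m) - 1
            + Real.cos (2 * π * d * k / m)) := by
    refine Finset.sum_congr rfl fun k hk => ?_
    rw [show 2 * π * (k:ℝ) * d / m = 2 * (d:ℝ) * (π * k / m) from by ring,
      cot_mul_sin_nat _ (hsin k hk) d]
    congr 1
    · congr 1
      congr 1
      exact Finset.sum_congr rfl fun j _ => congrArg Real.cos (by ring)
    · exact congrArg Real.cos (by ring)
  rw [step1]
  have hcard : (Finset.Icc 1 (m - 1)).card = m - 1 := by rw [Nat.card_Icc]; omega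
  have hT0 : ∑ k ∈ Finset.Icc 1 (m - 1), Real.cos (2 * π * (0:ℕ) * k / m) = (m:ℝ) - 1 := by
    have : ∀ k ∈ Finset.Icc 1 (m-1), Real.cos (2 * π * (0:ℕ) * k / m) = 1 := by
      intro k _; norm_num
    rw [Finset.sum_congr rfl this, Finset.sum_const, hcard, nsmul_eq_mul, mul_one,
      Nat.cast_sub (by omega : 1 ≤ m), Nat.cast_one]
  obtain ⟨d', rfl⟩ : ∃ d', d = d' + 1 := ⟨d - 1, by omega⟩
  have hSd : ∑ k ∈ Finset.Icc 1 (m - 1), Real.cos (2 * π * ((d'+1:ℕ):ℝ) * k / m) = -1 :=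
    sum_cos_Icc m (d'+1) hm (by omega) (by omega)
  have hTj : ∀ j ∈ Finset.range d', ∑ k ∈ Finset.Icc 1 (m - 1),
      Real.cos (2 * π * ((j+1:ℕ):ℝ) * k / m) = -1 := fun j hj =>
    sum_cos_Icc m (j+1) hm (by omega) (by simp only [Finset.mem_range] at hj; omega)
  have hSS : ∑ k ∈ Finset.Icc 1 (m - 1), ∑ j ∈ Finset.range (d'+1),
      Real.cos (2 * π * j * k / m) = ((m:ℝ) - 1) + d' * (-1) := by
    rw [Finset.sum_comm, Finset.sum_range_succ', hT0, Finset.sum_congr rfl hTj,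
      Finset.sum_const]
    simp [Finset.card_range]
    ring
  rw [Finset.sum_add_distrib, Finset.sum_sub_distrib, Finset.sum_const, hcard,
    ← Finset.mul_sum, hSS, hSd, nsmul_eq_mul, mul_one, Nat.cast_sub (by omega : 1 ≤ m),
    Nat.cast_one]
  push_cast
  ring

lemma keyOne (m e b : ℕ) (hm : 2 ≤ m) (hb1 : 1 ≤ b) (hb : b < m) (hdvd : m ∣ 1 + b * e) :
    ∑ k ∈ Finset.Icc 1 (m - 1), Real.cot (π * k * e / m) * Real.sin (2 * π * k / m)
      = (m:ℝ) - 2 * ((m - b : ℕ) : ℝ) := by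
  obtain ⟨s, hs⟩ := hdvd
  set d : ℕ := m - b with hdd
  have he1 : 1 ≤ e := by
    rcases Nat.eq_zero_or_pos e with h | h
    · exfalso
      subst h
      simp only [Nat.mul_zero, Nat.add_zero] at hs
      have hdvd1 : m ∣ 1 := ⟨s, hs⟩
      have := Nat.le_of_dvd Nat.one_pos hdvd1
      omega
    · exact h
  have hse : s ≤ e := by
    have h1 : b * e ≤ (m - 1) * e := Nat.mul_le_mul_right _ (by omega)
    have h2 : m * s ≤ 1 + (m - 1) * e := by
      rw [← hs]; exact Nat.add_le_add_left h1 1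
    have hme : m * e = (m - 1) * e + e := by
      have he2 : e ≤ m * e := Nat.le_mul_of_pos_left e (by omega)
      rw [Nat.sub_mul, one_mul]; omega
    have h3 : 1 + (m - 1) * e ≤ m * e := by
      rw [hme, Nat.add_comm 1]
      exact Nat.add_le_add_left he1 _
    exact Nat.le_of_mul_le_mul_left (h2.trans h3) (by omega)
  set t : ℕ := e - s with htt
  have ht : d * e = m * t + 1 := by
    have hz : (d:ℤ) * e = m * t + 1 := by
      rw [hdd, htt]
      push_cast [Nat.cast_sub (by omega : b ≤ m), Nat.cast_sub hse]
      have hsz : (1:ℤ) + b * e = m * s := by exact_mod_cast hs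
      linear_combination -hsz
    exact_mod_cast hz
  -- the bijection
  have hmem : ∀ c : ℕ, (∀ k : ℕ, c * e = m * k + 1 → False) → True := fun _ _ => trivial
  have main : ∀ (u v : ℕ), u * v = m * t + 1 → ∀ k ∈ Finset.Icc 1 (m - 1),
      u * k % m ∈ Finset.Icc 1 (m - 1) := by
    intro u v huv k hk
    simp only [Finset.mem_Icc] at hk ⊢
    have hlt : u * k % m < m := Nat.mod_lt _ (by omega)
    constructor
    · by_contra h
      have h0 : u * k % m = 0 := by omega
      have hdvd' : m ∣ u * k := Nat.dvd_of_mod_eq_zero h0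
      have : m ∣ v * (u * k) := hdvd'.mul_left v
      have heq : v * (u * k) = m * (t * k) + k := by
        rw [show v * (u * k) = (u * v) * k from by ring, huv]; ring
      rw [heq] at this
      have : m ∣ k := (Nat.dvd_add_right ⟨t * k, rfl⟩).mp this
      have := Nat.le_of_dvd (by omega) this
      omega
    · omega
  have hinv : ∀ (u v : ℕ), u * v = m * t + 1 → ∀ k ∈ Finset.Icc 1 (m - 1),
      v * (u * k % m) % m = k := by
    intro u v huv k hk
    simp only [Finset.mem_Icc] at hk
    have h1 : (v * (u * k % m)) % m = (v * (u * k)) % m :=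
      ((Nat.mod_modEq (u * k) m).mul_left v)
    rw [h1, show v * (u * k) = k + m * (t * k) from by
        rw [show v * (u * k) = (u * v) * k from by ring, huv]; ring,
      Nat.add_mul_mod_self_left, Nat.mod_eq_of_lt (by omega)]
  have hed : e * d = m * t + 1 := by rw [mul_comm]; exact ht
  have hbij : ∑ k ∈ Finset.Icc 1 (m - 1), Real.cot (π * k * e / m) * Real.sin (2 * π * k / m)
      = ∑ k ∈ Finset.Icc 1 (m - 1), Real.cot (π * k / m) * Real.sin (2 * π * k * d / m) := by
    refine (Finset.sum_nbij' (fun k => e * k % m) (fun k => d * k % m)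
      (main e d hed) (main d e ht) (hinv e d hed) (hinv d e ht) ?_)
    intro k hk
    simp only [Finset.mem_Icc] at hk
    set r : ℕ := e * k % m with hrr
    set q : ℕ := e * k / m with hqq
    have hr : (e * k : ℝ) = m * q + r := by
      exact_mod_cast (Nat.div_add_mod (e * k) m).symm
    have htR : (d:ℝ) * e = m * t + 1 := by exact_mod_cast ht
    have hm0 : (m:ℝ) ≠ 0 := by positivity
    have hcot : Real.cot (π * k * e / m) = Real.cot (π * r / m) := by
      rw [show π * (k:ℝ) * e / m = π * r / m + (q : ℤ) * π from by
        push_cast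
        field_simp
        linear_combination hr]
      exact cot_add_int_mul_pi _ _
    have hsin : Real.sin (2 * π * (r:ℝ) * d / m) = Real.sin (2 * π * k / m) := by
      rw [show 2 * π * (r:ℝ) * d / m = 2 * π * k / m + ((t * k - d * q : ℤ) : ℝ) * (2 * π) from by
        push_cast
        field_simp
        linear_combination (-(d:ℝ)) * hr + (k:ℝ) * htR]
      exact Real.sin_add_int_mul_two_pi _ _
    rw [hcot, ← hsin]
  rw [hbij, lemA m d hm (by omega) (by omega)]

lemma cot_mul_sin_sq (x : ℝ) : Real.cot x * Real.sin x ^ 2 = Real.sin (2 * x) / 2 := by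
  rcases eq_or_ne (Real.sin x) 0 with h | h
  · simp [Real.cot_eq_cos_div_sin, h, Real.sin_two_mul]
  · rw [Real.cot_eq_cos_div_sin, Real.sin_two_mul]
    field_simp

lemma fsTerm_eq (m e b : ℕ) (hm : 2 ≤ m) (hb1 : 1 ≤ b) (hb : b < m) (hdvd : m ∣ 1 + b * e) :
    fsTerm ((m : ℝ) * e) m = 2 * b / m - 1 := by
  have hm0 : (m:ℝ) ≠ 0 := by positivity
  have hstep : ∀ k : ℕ, Real.cot (π * k * ((m:ℝ) * e) / (m:ℝ) ^ 2) * Real.cot (π * k / m) *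
      Real.sin (π * k / m) ^ 2
      = Real.cot (π * k * e / m) * Real.sin (2 * π * k / m) / 2 := by
    intro k
    have h1 : π * (k:ℝ) * ((m:ℝ) * e) / (m:ℝ) ^ 2 = π * k * e / m := by
      field_simp
    rw [h1, mul_assoc, cot_mul_sin_sq,
      show 2 * (π * (k:ℝ) / m) = 2 * π * k / m from by ring]
    ring
  unfold fsTerm
  rw [Finset.sum_congr rfl fun k _ => hstep k, ← Finset.sum_div,
    keyOne m e b hm hb1 hb hdvd, Nat.cast_sub (by omega : b ≤ m)]
  field_simp
  ring


/-- Let `n ≥ 3`, let `a₁, …, aₙ` be pairwise coprime integers with `aᵢ ≥ 2`, let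
`a := a₁⋯aₙ`, and for each `i` let `βᵢ` be the unique integer with `0 < βᵢ < aᵢ` and
`aᵢ ∣ 1 + βᵢ·(a/aᵢ)`. Then, as real numbers,
`R(a₁,…,aₙ) = 2·(1/a + Σᵢ βᵢ/aᵢ) - 3`. -/
theorem stmt_14 (n : ℕ) (hn : 3 ≤ n) (a : Fin n → ℕ)
    (ha2 : ∀ i, 2 ≤ a i)
    (hcop : ∀ i j, i ≠ j → Nat.Coprime (a i) (a j))
    (β : Fin n → ℕ)
    (hβpos : ∀ i, 0 < β i) (hβlt : ∀ i, β i < a i)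
    (hβ : ∀ i, a i ∣ 1 + β i * ((∏ j, a j) / a i)) :
    FSR n a = 2 * (1 / (∏ j, (a j : ℝ)) + ∑ i, (β i : ℝ) / (a i : ℝ)) - 3 := by
  have hterm : ∀ i, fsTerm (∏ j, (a j : ℝ)) (a i) = 2 * (β i : ℝ) / (a i) - 1 := by
    intro i
    have hdvd : a i ∣ ∏ j, a j := Finset.dvd_prod_of_mem a (Finset.mem_univ i)
    have hprod : (∏ j, (a j : ℝ)) = ((a i : ℕ) : ℝ) * (((∏ j, a j) / a i : ℕ) : ℝ) := by
      rw [← Nat.cast_mul, Nat.mul_div_cancel' hdvd, Nat.cast_prod]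
    rw [hprod]
    exact fsTerm_eq (a i) ((∏ j, a j) / a i) (β i) (ha2 i) (hβpos i) (hβlt i) (hβ i)
  unfold FSR
  rw [Finset.sum_congr rfl fun i _ => hterm i, Finset.sum_sub_distrib, Finset.sum_const,
    Finset.card_univ, Fintype.card_fin, nsmul_eq_mul, mul_one]
  have : ∑ i, 2 * (β i : ℝ) / (a i) = 2 * ∑ i, (β i : ℝ) / (a i) := by
    rw [Finset.mul_sum]
    exact Finset.sum_congr rfl fun i _ => by ring
  rw [this]
  ring
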